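/- Let C, Z_1, ..., Z_n ∈ B(H) satisfy ‖Ch‖² + ∑_{i=1}^n ‖Z_i h‖² ≤ ‖h‖² for all h ∈ H. Then for every h ∈ H and every m ≥ 0, ∑_{k=0}^m ∑_{|α|=k} ‖C Z_α h‖² ≤ ‖h‖², where the inner sum is over all words of length k in the free semigroup on n generators. -/
import Mathlib

/-- `Z_α := Z_{i_1} ⋯ Z_{i_k}` for a word `α` in the free semigroup on `n`
generators (`Z_∅ = I`). -/
noncomputable def wordProd {H : Type*} [NormedAddCommGroup H] [NormedSpace ℂ H]
    {n : ℕ} (Z : Fin n → H →L[ℂ] H) (α : List (Fin n)) : H →L[ℂ] H :=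
  (α.map Z).prod

lemma wordProd_cons {H : Type*} [NormedAddCommGroup H] [NormedSpace ℂ H]
    {n : ℕ} (Z : Fin n → H →L[ℂ] H) (i : Fin n) (α : List (Fin n)) :
    wordProd Z (i :: α) = Z i * wordProd Z α := by
  simp [wordProd]

lemma sum_succ_words {H : Type*} [NormedAddCommGroup H] [NormedSpace ℂ H]
    {n : ℕ} (Z : Fin n → H →L[ℂ] H) (h : H) (m : ℕ) :
    ∑ β : Fin (m + 1) → Fin n, ‖wordProd Z (List.ofFn β) h‖ ^ 2
      = ∑ α : Fin m → Fin n, ∑ i : Fin n,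
          ‖Z i (wordProd Z (List.ofFn α) h)‖ ^ 2 := by
  rw [← Fintype.sum_equiv (Fin.consEquiv fun _ => Fin n)
    (fun p : Fin n × (Fin m → Fin n) => ‖Z p.1 (wordProd Z (List.ofFn p.2) h)‖ ^ 2)
    (fun β => ‖wordProd Z (List.ofFn β) h‖ ^ 2)
    (fun ⟨i, α⟩ => by simp [Fin.consEquiv, List.ofFn_succ, wordProd_cons])]
  rw [Fintype.sum_prod_type, Finset.sum_comm]

/-- If `‖Ch‖² + ∑ ‖Z_i h‖² ≤ ‖h‖²` for all `h`, then for every `h` and every `m ≥ 0`,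
`∑_{k=0}^m ∑_{|α|=k} ‖C Z_α h‖² ≤ ‖h‖²`. -/
theorem wordProd_contraction_partial_sums
    {H : Type*} [NormedAddCommGroup H] [InnerProductSpace ℂ H]
    {n : ℕ} (C : H →L[ℂ] H) (Z : Fin n → H →L[ℂ] H)
    (hc : ∀ h : H, ‖C h‖ ^ 2 + ∑ i, ‖Z i h‖ ^ 2 ≤ ‖h‖ ^ 2)
    (h : H) (m : ℕ) :
    ∑ k ∈ Finset.range (m + 1), ∑ α : Fin k → Fin n,
      ‖C (wordProd Z (List.ofFn α) h)‖ ^ 2 ≤ ‖h‖ ^ 2 := by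
  have key : ∀ m : ℕ, ∑ k ∈ Finset.range (m + 1), (∑ α : Fin k → Fin n,
      ‖C (wordProd Z (List.ofFn α) h)‖ ^ 2)
      + ∑ β : Fin (m + 1) → Fin n, ‖wordProd Z (List.ofFn β) h‖ ^ 2 ≤ ‖h‖ ^ 2 := by
    intro m
    induction m with
    | zero =>
        have h1 := hc h
        rw [sum_succ_words]
        simpa [wordProd] using h1
    | succ m ih =>
        have step : ∑ α : Fin (m + 1) → Fin n, ‖C (wordProd Z (List.ofFn α) h)‖ ^ 2
            + ∑ β : Fin (m + 2) → Fin n, ‖wordProd Z (List.ofFn β) h‖ ^ 2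
            ≤ ∑ α : Fin (m + 1) → Fin n, ‖wordProd Z (List.ofFn α) h‖ ^ 2 := by
          rw [sum_succ_words, ← Finset.sum_add_distrib]
          exact Finset.sum_le_sum fun α _ => hc _
        calc _ ≤ ∑ k ∈ Finset.range (m + 1), (∑ α : Fin k → Fin n,
              ‖C (wordProd Z (List.ofFn α) h)‖ ^ 2)
              + ∑ α : Fin (m + 1) → Fin n, ‖wordProd Z (List.ofFn α) h‖ ^ 2 := by
              rw [Finset.sum_range_succ]
              linarith
          _ ≤ ‖h‖ ^ 2 := ih
  have pos : 0 ≤ ∑ β : Fin (m + 1) → Fin n, ‖wordProd Z (List.ofFn β) h‖ ^ 2 :=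
    Finset.sum_nonneg fun _ _ => by positivity
  linarith [key m]
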